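/- Let D be a nonempty convex set in X with Minkowski function γ_D(x) = inf{λ ≥ 0 : x ∈ λD}. Then the polar gauge of γ_D equals the Minkowski function of the polar set: (γ_D)° = γ_{D°}. -/

import Mathlib

open scoped RealInnerProductSpace ENNReal Pointwise

/-- The Minkowski function `γ_D(x) = inf {λ ≥ 0 : x ∈ λD}`, valued in `ℝ≥0∞`. -/
noncomputable def minkowski {E : Type*} [NormedAddCommGroup E] [NormedSpace ℝ E]
    (D : Set E) (x : E) : ℝ≥0∞ :=
  sInf {μ : ℝ≥0∞ | ∃ l : ℝ, 0 ≤ l ∧ μ = ENNReal.ofReal l ∧ x ∈ l • D}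

/-- The polar set `D° = {y : ⟨x,y⟩ ≤ 1 for all x ∈ D}`. -/
def polarSet {E : Type*} [NormedAddCommGroup E] [InnerProductSpace ℝ E] (D : Set E) :
    Set E :=
  {y : E | ∀ x ∈ D, ⟪x, y⟫ ≤ 1}

/-- The polar gauge `κ°(y) = inf {μ > 0 : ⟨x,y⟩ ≤ μ κ(x) for all x}`. -/
noncomputable def polarGauge {E : Type*} [NormedAddCommGroup E] [InnerProductSpace ℝ E]
    (κ : E → ℝ≥0∞) (y : E) : ℝ≥0∞ :=
  sInf {μ : ℝ≥0∞ | 0 < μ ∧ ∀ x : E, ENNReal.ofReal ⟪x, y⟫ ≤ μ * κ x}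

theorem polarGauge_minkowski_eq_minkowski_polarSet {E : Type*} [NormedAddCommGroup E]
    [InnerProductSpace ℝ E] [FiniteDimensional ℝ E] (D : Set E) (hD : D.Nonempty)
    (hconv : Convex ℝ D) :
    ∀ y : E, polarGauge (minkowski D) y = minkowski (polarSet D) y := by
  intro y
  set S : ℝ≥0∞ := ⨆ x ∈ D, ENNReal.ofReal ⟪x, y⟫ with hSdef
  have hSle : ∀ x ∈ D, ENNReal.ofReal ⟪x, y⟫ ≤ S := fun x hx =>
    le_iSup₂ (f := fun (x : E) (_ : x ∈ D) => ENNReal.ofReal ⟪x, y⟫) x hx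
  have key : ∀ l : ℝ, 0 < l → S ≤ ENNReal.ofReal l → ∀ x ∈ D, ⟪x, y⟫ ≤ l := by
    intro l hl hSl x hx
    have h := (hSle x hx).trans hSl
    rcases le_or_gt ⟪x, y⟫ 0 with h0 | h0
    · linarith
    · exact (ENNReal.ofReal_le_ofReal_iff hl.le).mp h
  have h1 : polarGauge (minkowski D) y = S := by
    apply le_antisymm
    · apply le_of_forall_gt_imp_ge_of_dense
      intro c hc
      rcases eq_or_ne c ⊤ with rfl | hctop
      · exact le_top
      have hc0 : c ≠ 0 := fun h => by simp [h] at hc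
      apply sInf_le
      refine ⟨pos_iff_ne_zero.mpr hc0, fun x => ?_⟩
      rw [minkowski]
      have hdiv : ENNReal.ofReal ⟪x, y⟫ / c ≤
          sInf {μ : ℝ≥0∞ | ∃ l : ℝ, 0 ≤ l ∧ μ = ENNReal.ofReal l ∧ x ∈ l • D} := by
        apply le_sInf
        rintro μ ⟨l, hl0, rfl, hxl⟩
        rw [ENNReal.div_le_iff_le_mul (Or.inl hc0) (Or.inl hctop)]
        rcases hl0.eq_or_lt with rfl | hl
        · have hx0 : x = 0 := by
            rw [Set.zero_smul_set hD] at hxl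
            simpa using hxl
          simp [hx0]
        · obtain ⟨x', hx', rfl⟩ := hxl
          calc ENNReal.ofReal ⟪l • x', y⟫
              = ENNReal.ofReal l * ENNReal.ofReal ⟪x', y⟫ := by
                rw [real_inner_smul_left, ENNReal.ofReal_mul hl0]
            _ ≤ ENNReal.ofReal l * S := mul_le_mul_right (hSle x' hx') _
            _ ≤ ENNReal.ofReal l * c := mul_le_mul_right hc.le _
            _ = ENNReal.ofReal l * c := rfl
      calc ENNReal.ofReal ⟪x, y⟫ = c * (ENNReal.ofReal ⟪x, y⟫ / c) :=
            (ENNReal.mul_div_cancel hc0 hctop).symm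
        _ ≤ c * _ := mul_le_mul_right hdiv c
    · apply le_sInf
      rintro μ ⟨hμ0, hμ⟩
      apply iSup₂_le
      intro x hx
      have h2 : minkowski D x ≤ 1 :=
        sInf_le ⟨1, zero_le_one, ENNReal.ofReal_one.symm, by rw [one_smul]; exact hx⟩
      calc ENNReal.ofReal ⟪x, y⟫ ≤ μ * minkowski D x := hμ x
        _ ≤ μ * 1 := mul_le_mul_right h2 μ
        _ = μ := mul_one μ
  have h2 : minkowski (polarSet D) y = S := by
    apply le_antisymm
    · apply le_of_forall_gt_imp_ge_of_dense
      intro c hc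
      rcases eq_or_ne c ⊤ with rfl | hctop
      · exact le_top
      have hc0 : c ≠ 0 := fun h => by simp [h] at hc
      set l := c.toReal with hldef
      have hl : 0 < l := ENNReal.toReal_pos hc0 hctop
      have hcl : c = ENNReal.ofReal l := (ENNReal.ofReal_toReal hctop).symm
      apply sInf_le
      refine ⟨l, hl.le, hcl, l⁻¹ • y, ?_, smul_inv_smul₀ hl.ne' y⟩
      intro x hx
      have hxy : ⟪x, y⟫ ≤ l := key l hl (hcl ▸ hc.le) x hx
      rw [real_inner_smul_right]
      rw [inv_mul_le_iff₀ hl, mul_one]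
      exact hxy
    · apply le_sInf
      rintro μ ⟨l, hl0, rfl, hyl⟩
      rcases hl0.eq_or_lt with rfl | hl
      · have hpol : (polarSet D).Nonempty := ⟨0, fun x _ => by simp⟩
        rw [Set.zero_smul_set hpol] at hyl
        have hy0 : y = 0 := by simpa using hyl
        apply iSup₂_le
        intro x hx
        simp [hy0]
      · obtain ⟨z, hz, rfl⟩ := hyl
        apply iSup₂_le
        intro x hx
        apply ENNReal.ofReal_le_ofReal
        rw [real_inner_smul_right]
        have := hz x hx
        nlinarith
  rw [h1, h2]
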